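/- arXiv:2605.20383 — 5 statements merged into one kernel-verified Lean document; each statement's English description precedes it below -/
import Mathlib

section
/- Right multiplication by an affine simple reflection preserves the discrepancy Δ_b(w) = #{t ≤ b : w(t) > a} − #{t > b : w(t) ≤ a}. That is, if s_r is the affine simple reflection acting by swapping values at positions p and p+1 for all p ≡ r (mod n), then Δ_b(w s_r) = Δ_b(w) for every w ∈ S̃_n and all integers a, b. -/
lemma fin_left_aux (v : ℤ → ℤ) (M a b : ℤ)
    (hM : ∀ t : ℤ, -M ≤ v t - t ∧ v t - t ≤ M) :
    {t : ℤ | t ≤ b ∧ a < v t}.Finite := by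
  apply Set.Finite.subset (Set.finite_Icc (a - M) b)
  rintro t ⟨ht, hat⟩
  have h := hM t
  simp only [Set.mem_Icc]
  omega

lemma fin_right_aux (v : ℤ → ℤ) (M a b : ℤ)
    (hM : ∀ t : ℤ, -M ≤ v t - t ∧ v t - t ≤ M) :
    {t : ℤ | b < t ∧ v t ≤ a}.Finite := by
  apply Set.Finite.subset (Set.finite_Icc (b + 1) (a + M))
  rintro t ⟨ht, hat⟩
  have h := hM t
  simp only [Set.mem_Icc]
  omega

open Classical in
lemma ncard_or_eq_aux (x : ℤ) (D Q : ℤ → Prop)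
    (hfin : {u : ℤ | D u ∧ Q u}.Finite) (hx : ¬ D x) :
    {u : ℤ | (u = x ∨ D u) ∧ Q u}.ncard
      = {u : ℤ | D u ∧ Q u}.ncard + if Q x then 1 else 0 := by
  classical
  by_cases hQ : Q x
  · have he : {u : ℤ | (u = x ∨ D u) ∧ Q u} = insert x {u : ℤ | D u ∧ Q u} := by
      ext u
      simp only [Set.mem_setOf_eq, Set.mem_insert_iff]
      constructor
      · rintro ⟨h1 | h1, h2⟩
        · exact Or.inl h1
        · exact Or.inr ⟨h1, h2⟩
      · rintro (rfl | ⟨h1, h2⟩)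
        · exact ⟨Or.inl rfl, hQ⟩
        · exact ⟨Or.inr h1, h2⟩
    rw [he, Set.ncard_insert_of_notMem (fun h => hx h.1) hfin, if_pos hQ]
  · have he : {u : ℤ | (u = x ∨ D u) ∧ Q u} = {u : ℤ | D u ∧ Q u} := by
      ext u
      simp only [Set.mem_setOf_eq]
      constructor
      · rintro ⟨h1 | h1, h2⟩
        · exact absurd (h1 ▸ h2) hQ
        · exact ⟨h1, h2⟩
      · rintro ⟨h1, h2⟩
        exact ⟨Or.inr h1, h2⟩
    rw [he, if_neg hQ, add_zero]

/-- Right multiplication by an affine simple reflection `s_r` preserves the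
discrepancy `Δ_b(w) = #{t ≤ b : w t > a} − #{t > b : w t ≤ a}`. -/
theorem stmt2 (n : ℕ) (hn : 1 ≤ n) (w : ℤ → ℤ)
    (hbij : Function.Bijective w)
    (hper : ∀ t : ℤ, w (t + n) = w t + n)
    (r : ℤ) (hr0 : 0 ≤ r) (hrn : r < n)
    (s : ℤ → ℤ)
    (hs1 : ∀ p : ℤ, p % n = r → s p = p + 1 ∧ s (p + 1) = p)
    (hs2 : ∀ q : ℤ, q % n ≠ r → (q - 1) % n ≠ r → s q = q)
    (a b : ℤ) :
    ({t : ℤ | t ≤ b ∧ a < (w ∘ s) t}.ncard : ℤ)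
      - ({t : ℤ | b < t ∧ (w ∘ s) t ≤ a}.ncard : ℤ)
    = ({t : ℤ | t ≤ b ∧ a < w t}.ncard : ℤ)
      - ({t : ℤ | b < t ∧ w t ≤ a}.ncard : ℤ) := by
  classical
  -- case analysis on the value of `s`
  have hcase : ∀ t : ℤ, (t % (n:ℤ) = r ∧ s t = t + 1) ∨
      ((t - 1) % (n:ℤ) = r ∧ s t = t - 1) ∨ s t = t := by
    intro t
    by_cases h1 : t % (n:ℤ) = r
    · exact Or.inl ⟨h1, (hs1 t h1).1⟩
    by_cases h2 : (t - 1) % (n:ℤ) = r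
    · refine Or.inr (Or.inl ⟨h2, ?_⟩)
      have := (hs1 (t - 1) h2).2
      simpa using this
    · exact Or.inr (Or.inr (hs2 t h1 h2))
  -- s is an involution
  have hss : ∀ t : ℤ, s (s t) = t := by
    intro t
    by_cases h1 : t % (n:ℤ) = r
    · rw [(hs1 t h1).1, (hs1 t h1).2]
    by_cases h2 : (t - 1) % (n:ℤ) = r
    · have ha : s t = t - 1 := by
        have := (hs1 (t - 1) h2).2
        simpa using this
      have hb : s (t - 1) = t := by
        have := (hs1 (t - 1) h2).1
        omega
      rw [ha, hb]
    · rw [hs2 t h1 h2, hs2 t h1 h2]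
  have hsinj : Function.Injective s := Function.LeftInverse.injective hss
  -- periodicity in both directions
  have hwsub : ∀ x : ℤ, w (x - (n:ℤ)) = w x - n := by
    intro x
    have := hper (x - n)
    rw [sub_add_cancel] at this
    omega
  have hpern : ∀ k : ℤ, ∀ t : ℤ, w (t + k * n) = w t + k * n := by
    intro k
    induction k using Int.induction_on with
    | zero => simp
    | succ k ih =>
      intro t
      have e : t + ((k:ℤ) + 1) * n = (t + k * n) + n := by ring
      rw [e, hper, ih]
      ring
    | pred k ih =>
      intro t
      have e : t + (-(k:ℤ) - 1) * n = (t + -(k:ℤ) * n) - n := by ring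
      rw [e, hwsub, ih]
      ring
  have hmodval : ∀ t : ℤ, w t - t = w (t % n) - t % n := by
    intro t
    have h2 := hpern (t / n) (t % n)
    have h3 : t % (n:ℤ) + t / n * n = t := by rw [mul_comm]; exact Int.emod_add_mul_ediv t n
    rw [h3] at h2
    linarith
  -- uniform bound M
  have hnpos : (0:ℤ) < (n:ℤ) := by exact_mod_cast hn
  have hne : (Finset.Icc (0:ℤ) ((n:ℤ) - 1)).Nonempty :=
    ⟨0, Finset.mem_Icc.mpr ⟨le_refl 0, by omega⟩⟩
  set M := (Finset.Icc (0:ℤ) ((n:ℤ) - 1)).sup' hne (fun i => |w i - i|) with hMdef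
  have hM : ∀ t : ℤ, -M ≤ w t - t ∧ w t - t ≤ M := by
    intro t
    have hmem : t % (n:ℤ) ∈ Finset.Icc (0:ℤ) ((n:ℤ) - 1) := by
      rw [Finset.mem_Icc]
      have h1 := Int.emod_nonneg t (by omega : (n:ℤ) ≠ 0)
      have h2 := Int.emod_lt_of_pos t hnpos
      omega
    have hle : |w (t % (n:ℤ)) - t % (n:ℤ)| ≤ M :=
      Finset.le_sup' (fun i => |w i - i|) hmem
    rw [hmodval t]
    exact abs_le.mp hle
  have hMs : ∀ t : ℤ, -(M + 1) ≤ w (s t) - t ∧ w (s t) - t ≤ M + 1 := by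
    intro t
    rcases hcase t with ⟨_, he⟩ | ⟨_, he⟩ | he
    · have := hM (t + 1); rw [he]; omega
    · have := hM (t - 1); rw [he]; omega
    · have := hM t; rw [he]; omega
  -- finiteness
  have hfinA' : {t : ℤ | t ≤ b ∧ a < w t}.Finite := fin_left_aux w M a b hM
  have hfinB' : {t : ℤ | b < t ∧ w t ≤ a}.Finite := fin_right_aux w M a b hM
  -- image computations
  have himg1 : s '' {t : ℤ | t ≤ b ∧ a < w (s t)} = {u : ℤ | s u ≤ b ∧ a < w u} := by
    ext u
    constructor
    · rintro ⟨t, ⟨ht, hat⟩, rfl⟩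
      exact ⟨by rw [hss]; exact ht, hat⟩
    · rintro ⟨h1, h2⟩
      exact ⟨s u, ⟨h1, by rw [hss]; exact h2⟩, hss u⟩
  have himg2 : s '' {t : ℤ | b < t ∧ w (s t) ≤ a} = {u : ℤ | b < s u ∧ w u ≤ a} := by
    ext u
    constructor
    · rintro ⟨t, ⟨ht, hat⟩, rfl⟩
      exact ⟨by rw [hss]; exact ht, hat⟩
    · rintro ⟨h1, h2⟩
      exact ⟨s u, ⟨h1, by rw [hss]; exact h2⟩, hss u⟩
  have e1 : {t : ℤ | t ≤ b ∧ a < w (s t)}.ncard = {u : ℤ | s u ≤ b ∧ a < w u}.ncard := by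
    rw [← himg1, Set.ncard_image_of_injective _ hsinj]
  have e2 : {t : ℤ | b < t ∧ w (s t) ≤ a}.ncard = {u : ℤ | b < s u ∧ w u ≤ a}.ncard := by
    rw [← himg2, Set.ncard_image_of_injective _ hsinj]
  simp only [Function.comp_apply]
  rw [e1, e2]
  by_cases hbr : b % (n:ℤ) = r
  · -- boundary case: s swaps b and b+1
    have hsb : s b = b + 1 := (hs1 b hbr).1
    have hsb1 : s (b + 1) = b := (hs1 b hbr).2
    have hSle : ∀ u : ℤ, s u ≤ b ↔ (u = b + 1 ∨ u < b) := by
      intro u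
      rcases hcase u with ⟨hm, he⟩ | ⟨hm, he⟩ | he
      · constructor
        · intro h; right; omega
        · rintro (rfl | h)
          · rw [he] at hsb1; omega
          · omega
      · constructor
        · intro h
          by_cases hub : u = b
          · rw [hub] at he; omega
          · omega
        · rintro (rfl | h) <;> omega
      · constructor
        · intro h
          by_cases hub : u = b
          · rw [hub] at he; omega
          · omega
        · rintro (rfl | h)
          · rw [he] at hsb1; omega
          · omega
    have hSgt : ∀ u : ℤ, b < s u ↔ (u = b ∨ b + 1 < u) := by
      intro u
      have h := hSle u
      rcases hcase u with ⟨hm, he⟩ | ⟨hm, he⟩ | he <;> omega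
    have eA : {u : ℤ | s u ≤ b ∧ a < w u}
        = {u : ℤ | (u = b + 1 ∨ u < b) ∧ a < w u} := by
      ext u
      simp only [Set.mem_setOf_eq, hSle u]
    have eB : {u : ℤ | b < s u ∧ w u ≤ a}
        = {u : ℤ | (u = b ∨ b + 1 < u) ∧ w u ≤ a} := by
      ext u
      simp only [Set.mem_setOf_eq, hSgt u]
    have eA' : {t : ℤ | t ≤ b ∧ a < w t}
        = {u : ℤ | (u = b ∨ u < b) ∧ a < w u} := by
      ext u
      simp only [Set.mem_setOf_eq]
      constructor <;> rintro ⟨h1, h2⟩ <;> exact ⟨by omega, h2⟩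
    have eB' : {t : ℤ | b < t ∧ w t ≤ a}
        = {u : ℤ | (u = b + 1 ∨ b + 1 < u) ∧ w u ≤ a} := by
      ext u
      simp only [Set.mem_setOf_eq]
      constructor <;> rintro ⟨h1, h2⟩ <;> exact ⟨by omega, h2⟩
    have F1 : {u : ℤ | u < b ∧ a < w u}.Finite :=
      hfinA'.subset (by rintro u ⟨h1, h2⟩; exact ⟨by omega, h2⟩)
    have F2 : {u : ℤ | b + 1 < u ∧ w u ≤ a}.Finite :=
      hfinB'.subset (by rintro u ⟨h1, h2⟩; exact ⟨by omega, h2⟩)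
    rw [eA, eB, eA', eB']
    rw [ncard_or_eq_aux (b+1) (fun u => u < b) (fun u => a < w u) F1 (by omega)]
    rw [ncard_or_eq_aux b (fun u => b + 1 < u) (fun u => w u ≤ a) F2 (by omega)]
    rw [ncard_or_eq_aux b (fun u => u < b) (fun u => a < w u) F1 (by omega)]
    rw [ncard_or_eq_aux (b+1) (fun u => b + 1 < u) (fun u => w u ≤ a) F2 (by omega)]
    push_cast
    split_ifs <;> omega
  · -- generic case: s preserves the halves
    have hSle : ∀ u : ℤ, s u ≤ b ↔ u ≤ b := by
      intro u
      rcases hcase u with ⟨hm, he⟩ | ⟨hm, he⟩ | he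
      · constructor
        · intro h; omega
        · intro h
          have : u ≠ b := fun e => hbr (e ▸ hm)
          omega
      · constructor
        · intro h
          have : u ≠ b + 1 := by
            intro e
            rw [e] at hm
            simp only [add_sub_cancel_right] at hm
            exact hbr hm
          omega
        · intro h; omega
      · omega
    have eA : {u : ℤ | s u ≤ b ∧ a < w u} = {t : ℤ | t ≤ b ∧ a < w t} := by
      ext u
      simp only [Set.mem_setOf_eq, hSle u]
    have eB : {u : ℤ | b < s u ∧ w u ≤ a} = {t : ℤ | b < t ∧ w t ≤ a} := by
      ext u
      have h := hSle u
      simp only [Set.mem_setOf_eq]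
      constructor <;> rintro ⟨h1, h2⟩ <;> exact ⟨by omega, h2⟩
    rw [eA, eB]
end

section
/- The Fomin–Schur raising and lowering operators on partitions satisfy d_1 ∘ u_1 = id, d_j ∘ u_i = u_i ∘ d_j for i ≠ j, and d_{i+1} ∘ u_{i+1} = u_i ∘ d_i (as partial maps on the set of partitions extended by a zero element ∅). -/
open scoped Classical

/-- A partition as a weakly decreasing, eventually-zero function `ℕ → ℕ`
(row `i+1` of the partition is `f i`). -/
def IsPartitionFn (f : ℕ → ℕ) : Prop :=
  (∀ ⦃i j : ℕ⦄, i ≤ j → f j ≤ f i) ∧ ∃ N, ∀ k, N ≤ k → f k = 0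

def PartitionFn := {f : ℕ → ℕ // IsPartitionFn f}

/-- Add a box at the end of row `i` (rows indexed from 0). -/
def addBoxFn (f : ℕ → ℕ) (i : ℕ) : ℕ → ℕ := Function.update f i (f i + 1)

/-- Remove a box from the end of row `i` (rows indexed from 0). -/
def removeBoxFn (f : ℕ → ℕ) (i : ℕ) : ℕ → ℕ := Function.update f i (f i - 1)

/-- Fomin's raising operator `u_i` on partitions extended by a zero element
(`none` is the formal zero). -/
noncomputable def uOp (i : ℕ) : Option PartitionFn → Option PartitionFn :=
  fun x => x.bind fun p =>
    if h : IsPartitionFn (addBoxFn p.1 i) then some ⟨_, h⟩ else none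

/-- Fomin's lowering operator `d_i` on partitions extended by a zero element. -/
noncomputable def dOp (i : ℕ) : Option PartitionFn → Option PartitionFn :=
  fun x => x.bind fun p =>
    if h : 0 < p.1 i ∧ IsPartitionFn (removeBoxFn p.1 i) then some ⟨_, h.2⟩ else none

lemma addBoxFn_apply (f : ℕ → ℕ) (i k : ℕ) :
    addBoxFn f i k = if k = i then f i + 1 else f k := Function.update_apply ..

lemma removeBoxFn_apply (f : ℕ → ℕ) (i k : ℕ) :
    removeBoxFn f i k = if k = i then f i - 1 else f k := Function.update_apply ..

lemma isPartition_addBox {f : ℕ → ℕ} (hf : IsPartitionFn f) (i : ℕ) :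
    IsPartitionFn (addBoxFn f i) ↔ ∀ k, k + 1 = i → f i < f k := by
  constructor
  · intro hg k hk
    have := hg.1 (show k ≤ i by omega)
    rw [addBoxFn_apply, addBoxFn_apply, if_pos rfl, if_neg (by omega)] at this
    omega
  · intro h
    constructor
    · intro a b hab
      rw [addBoxFn_apply, addBoxFn_apply]
      split_ifs with h1 h2 h2
      · omega
      · -- b = i, a ≠ i, so a < i
        subst h1
        have h4 := h (b-1) (by omega)
        have h5 := hf.1 (show a ≤ b - 1 by omega)
        omega
      · -- a = i, b ≠ i
        subst h2; have := hf.1 hab; omega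
      · exact hf.1 hab
    · obtain ⟨N, hN⟩ := hf.2
      exact ⟨max N (i+1), fun k hk => by
        rw [addBoxFn_apply, if_neg (by omega)]; exact hN k (by omega)⟩

lemma isPartition_removeBox {f : ℕ → ℕ} (hf : IsPartitionFn f) (i : ℕ) :
    (0 < f i ∧ IsPartitionFn (removeBoxFn f i)) ↔ f (i + 1) < f i := by
  constructor
  · rintro ⟨hpos, hg⟩
    have := hg.1 (show i ≤ i + 1 by omega)
    rw [removeBoxFn_apply, removeBoxFn_apply, if_pos rfl, if_neg (by omega)] at this
    omega
  · intro h
    refine ⟨by omega, ?_, ?_⟩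
    · intro a b hab
      rw [removeBoxFn_apply, removeBoxFn_apply]
      split_ifs with h1 h2 h2
      · omega
      · -- b = i, a ≠ i : f i - 1 ≤ f a
        subst h1; have := hf.1 hab; omega
      · -- a = i, b ≠ i : b ≥ i + 1
        subst h2
        have : f b ≤ f (a+1) := hf.1 (by omega)
        omega
      · exact hf.1 hab
    · obtain ⟨N, hN⟩ := hf.2
      exact ⟨max N (i+1), fun k hk => by
        rw [removeBoxFn_apply, if_neg (by omega)]; exact hN k (by omega)⟩

lemma remove_add_same (f : ℕ → ℕ) (i : ℕ) :
    removeBoxFn (addBoxFn f i) i = f := by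
  funext k
  simp only [removeBoxFn_apply, addBoxFn_apply]
  split_ifs <;> subst_vars <;> omega

lemma add_remove_same {f : ℕ → ℕ} (i : ℕ) (h : 0 < f i) :
    addBoxFn (removeBoxFn f i) i = f := by
  funext k
  simp only [addBoxFn_apply, removeBoxFn_apply]
  split_ifs <;> subst_vars <;> omega

lemma remove_add_comm (f : ℕ → ℕ) {i j : ℕ} (hij : i ≠ j) :
    removeBoxFn (addBoxFn f i) j = addBoxFn (removeBoxFn f j) i := by
  funext k
  simp only [removeBoxFn_apply, addBoxFn_apply]
  split_ifs <;> subst_vars <;> omega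


/-- Relations of the Fomin–Schur operators: `d_1 u_1 = id`,
`d_j u_i = u_i d_j` for `i ≠ j`, and `d_{i+1} u_{i+1} = u_i d_i`
(rows indexed from 0 here, so row `1` is index `0`). -/
theorem stmt4 :
    dOp 0 ∘ uOp 0 = id ∧
    (∀ i j : ℕ, i ≠ j → dOp j ∘ uOp i = uOp i ∘ dOp j) ∧
    (∀ i : ℕ, dOp (i + 1) ∘ uOp (i + 1) = uOp i ∘ dOp i) := by
  refine ⟨?_, ?_, ?_⟩
  · -- d_1 u_1 = id
    funext x
    cases x with
    | none => rfl
    | some p =>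
      obtain ⟨f, hf⟩ := p
      have hA : IsPartitionFn (addBoxFn f 0) :=
        (isPartition_addBox hf 0).2 (by intro k hk; omega)
      have hB : 0 < addBoxFn f 0 0 ∧ IsPartitionFn (removeBoxFn (addBoxFn f 0) 0) := by
        apply (isPartition_removeBox hA 0).2
        have := hf.1 (show 0 ≤ 0 + 1 by omega)
        rw [addBoxFn_apply, addBoxFn_apply, if_pos rfl, if_neg (show ¬0+1=0 by omega)]
        omega
      simp only [Function.comp_apply, uOp, dOp]
      unfold PartitionFn at *
      simp only [Function.comp_apply, uOp, dOp, Option.bind_some, dif_pos hA,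
        Option.bind_some, dif_pos hB, id]
      exact congrArg some (Subtype.ext (remove_add_same f 0))
  · -- d_j u_i = u_i d_j for i ≠ j
    intro i j hij
    funext x
    cases x with
    | none => rfl
    | some p =>
      obtain ⟨f, hf⟩ := p
      simp only [Function.comp_apply, uOp, dOp]
      unfold PartitionFn at *
      simp only [Function.comp_apply, uOp, dOp, Option.bind_some]
      by_cases hA : IsPartitionFn (addBoxFn f i)
      · rw [dif_pos hA, Option.bind_some]
        by_cases hB : 0 < addBoxFn f i j ∧ IsPartitionFn (removeBoxFn (addBoxFn f i) j)
        · -- both sides defined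
          have hgB : addBoxFn f i (j+1) < addBoxFn f i j := (isPartition_removeBox hA j).1 hB
          have hgj : addBoxFn f i j = f j := by rw [addBoxFn_apply, if_neg (Ne.symm hij)]
          have hD : f (j+1) < f j := by
            rw [hgj, addBoxFn_apply] at hgB
            split_ifs at hgB with h
            · rw [← h] at hgB; omega
            · exact hgB
          have hDfull : 0 < f j ∧ IsPartitionFn (removeBoxFn f j) :=
            (isPartition_removeBox hf j).2 hD
          rw [dif_pos hB, dif_pos hDfull, Option.bind_some]
          have hE : IsPartitionFn (addBoxFn (removeBoxFn f j) i) := by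
            rw [← remove_add_comm f hij]; exact hB.2
          rw [dif_pos hE]
          exact congrArg some (Subtype.ext (remove_add_comm f hij))
        · rw [dif_neg hB]
          by_cases hD : 0 < f j ∧ IsPartitionFn (removeBoxFn f j)
          · have hE : ¬ IsPartitionFn (addBoxFn (removeBoxFn f j) i) := by
              intro hE
              refine hB ⟨?_, by rw [remove_add_comm f hij]; exact hE⟩
              rw [addBoxFn_apply, if_neg (Ne.symm hij)]; exact hD.1
            simp only [dif_pos hD, Option.bind_some, dif_neg hE]
          · simp only [dif_neg hD, Option.bind_none]
      · rw [dif_neg hA]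
        by_cases hD : 0 < f j ∧ IsPartitionFn (removeBoxFn f j)
        · have hE : ¬ IsPartitionFn (addBoxFn (removeBoxFn f j) i) := by
            intro hE
            apply hA
            have hE' : ∀ k, k+1 = i → removeBoxFn f j i < removeBoxFn f j k :=
              (isPartition_addBox hD.2 i).1 hE
            apply (isPartition_addBox hf i).2
            intro k hk
            have h2 := hE' k hk
            rw [removeBoxFn_apply, removeBoxFn_apply, if_neg hij] at h2
            split_ifs at h2 with h
            · rw [h]; omega
            · exact h2
          simp only [dif_pos hD, Option.bind_some, dif_neg hE, Option.bind_none]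
        · simp only [dif_neg hD, Option.bind_none]
  · -- d_{i+1} u_{i+1} = u_i d_i
    intro i
    funext x
    cases x with
    | none => rfl
    | some p =>
      obtain ⟨f, hf⟩ := p
      simp only [Function.comp_apply, uOp, dOp]
      unfold PartitionFn at *
      simp only [Function.comp_apply, uOp, dOp, Option.bind_some]
      by_cases hc : f (i+1) < f i
      · have hA : IsPartitionFn (addBoxFn f (i+1)) := by
          apply (isPartition_addBox hf (i+1)).2
          intro k hk
          have : k = i := by omega
          subst this; exact hc
        have hB : 0 < addBoxFn f (i+1) (i+1) ∧
            IsPartitionFn (removeBoxFn (addBoxFn f (i+1)) (i+1)) := by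
          apply (isPartition_removeBox hA (i+1)).2
          rw [addBoxFn_apply, addBoxFn_apply, if_pos rfl, if_neg (by omega)]
          have := hf.1 (show i+1 ≤ i+1+1 by omega); omega
        have hD : 0 < f i ∧ IsPartitionFn (removeBoxFn f i) :=
          (isPartition_removeBox hf i).2 hc
        have hE : IsPartitionFn (addBoxFn (removeBoxFn f i) i) := by
          rw [add_remove_same i hD.1]; exact hf
        simp only [dif_pos hA, Option.bind_some, dif_pos hB, dif_pos hD, dif_pos hE]
        exact congrArg some (Subtype.ext
          ((remove_add_same f (i+1)).trans (add_remove_same i hD.1).symm))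
      · have hA : ¬ IsPartitionFn (addBoxFn f (i+1)) := fun hA =>
          hc ((isPartition_addBox hf (i+1)).1 hA i rfl)
        have hD : ¬ (0 < f i ∧ IsPartitionFn (removeBoxFn f i)) := fun hD =>
          hc ((isPartition_removeBox hf i).1 hD)
        simp only [dif_neg hA, dif_neg hD, Option.bind_none]
end

section
/- Let μ and μ' be compositions of n and suppose a sequence of compositions μ^N, μ^{N+1}, … satisfies that μ^{i+1} dominates μ^i for all i ≥ N (dominance: all partial sums of μ^{i+1} are ≥ those of μ^i). If the sequence takes only finitely many values and is eventually constant equal to some μ^m, and λ^i := λ^N + μ^N + ⋯ + μ^{i-1} is a partition for all i, then μ^m is a partition. -/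
/-- If a sequence of compositions `μ^N, μ^{N+1}, …` of `n` is increasing in
dominance order, eventually constant equal to `μ^m`, and all partial sums
`λ^i = λ^N + μ^N + ⋯ + μ^{i-1}` are partitions, then `μ^m` is a partition. -/
theorem stmt9 (n : ℕ) (N m : ℕ) (hNm : N ≤ m)
    (mu : ℕ → ℕ → ℕ) (lamN : ℕ → ℕ)
    (hcomp : ∀ i, N ≤ i →
      ∃ K : ℕ, (∀ k, K ≤ k → mu i k = 0) ∧ ∑ k ∈ Finset.range K, mu i k = n)
    (hdom : ∀ i, N ≤ i → ∀ K : ℕ,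
      ∑ k ∈ Finset.range K, mu i k ≤ ∑ k ∈ Finset.range K, mu (i + 1) k)
    (hconst : ∀ i, m ≤ i → mu i = mu m)
    (hpart : ∀ i, N ≤ i →
      IsPartitionFn (fun k => lamN k + ∑ j ∈ Finset.Ico N i, mu j k)) :
    Antitone (mu m) := by
  have hsum : ∀ t k, ∑ j ∈ Finset.Ico N (m + t), mu j k
      = (∑ j ∈ Finset.Ico N m, mu j k) + t * mu m k := by
    intro t k
    rw [← Finset.sum_Ico_consecutive _ hNm (Nat.le_add_right m t)]
    congr 1
    rw [Finset.sum_congr rfl (fun j hj => by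
      rw [hconst j (Finset.mem_Ico.mp hj).1])]
    simp [Nat.Ico_eq_range', Finset.sum_const, mul_comm]
  apply antitone_nat_of_succ_le
  intro k
  by_contra h
  push_neg at h
  set t := lamN k + ∑ j ∈ Finset.Ico N m, mu j k + 1 with ht
  clear_value t
  have hp := (hpart (m + t) (le_trans hNm (Nat.le_add_right m t))).1
    (Nat.le_succ k)
  simp only [hsum, Nat.succ_eq_add_one] at hp
  have h1 : t * mu m k + t ≤ t * mu m (k + 1) := by
    calc t * mu m k + t = t * (mu m k + 1) := by ring
    _ ≤ t * mu m (k + 1) := Nat.mul_le_mul_left t h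
  generalize hA : t * mu m k = a at h1 hp
  generalize hB : t * mu m (k + 1) = b at h1 hp
  omega
end

section
/- Let P be a skew standard Young tableau of shape μ/ν with entries 1,…,l, and let T be the sequence T_k = (column index of entry k in P). Fix a column value a appearing in T together with a+1. Then the number of cells of ν in column a minus the number of cells of ν in column a+1 is at least d(𝐚), where 𝐚 is the subsequence of T consisting of the letters a and a+1, and d is defined as: the smallest nonnegative integer d such that for every i > 0, the (d+i)-th occurrence of a+1 in 𝐚 (when it exists) is preceded by at least i occurrences of a. -/
/-- `GoodSeq a l d` holds if for every `i > 0`, whenever the `(d+i)`-th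
occurrence of `a+1` exists in `l`, there are at least `i` occurrences of `a`
strictly before it. -/
def GoodSeq (a : ℕ) (l : List ℕ) (d : ℕ) : Prop :=
  ∀ (p : ℕ) (hp : p < l.length), l.get ⟨p, hp⟩ = a + 1 →
    ((l.take p).count (a + 1) + 1) - d ≤ (l.take p).count a

lemma aux_filter_take {α : Type*} (P : α → Bool) :
    ∀ (L : List α) (p : ℕ) (hp : p < (L.filter P).length),
    ∃ n, ∃ hn : n < L.length, L.get ⟨n, hn⟩ = (L.filter P).get ⟨p, hp⟩ ∧
      (L.filter P).take p = (L.take n).filter P := by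
  intro L
  induction L with
  | nil => intro p hp; simp at hp
  | cons x t ih =>
    intro p hp
    by_cases hx : P x
    · match p with
      | 0 => exact ⟨0, by simp, by simp [List.filter_cons, hx], by simp⟩
      | Nat.succ p' =>
        have hp' : p' < (t.filter P).length := by
          have := hp; rw [List.filter_cons] at this; simpa [hx] using this
        obtain ⟨n, hn, hget, htake⟩ := ih p' hp'
        refine ⟨n+1, by simpa using hn, ?_, ?_⟩
        · simpa [List.filter_cons, hx] using hget
        · simp [List.filter_cons, hx, List.take_succ_cons, htake]
    · have hp2 : p < (t.filter P).length := by
        have := hp; rw [List.filter_cons] at this; simpa [hx] using this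
      obtain ⟨n, hn, hget, htake⟩ := ih p hp2
      refine ⟨n+1, by simpa using hn, ?_, ?_⟩
      · simpa [List.filter_cons, hx] using hget
      · simp [List.filter_cons, hx, List.take_succ_cons, htake]

lemma aux_countP_finRange (l : ℕ) (q : Fin l → Bool) :
    ((List.finRange l).countP q) = (Finset.univ.filter (fun k => q k)).card := by
  rw [List.countP_eq_length_filter, Fin.univ_def]
  rw [Finset.filter, Finset.card]
  simp [Multiset.filter_coe]

lemma aux_countP_take_finRange (l n : ℕ) (q : Fin l → Bool) :
    (((List.finRange l).take n).countP q)
      = (Finset.univ.filter (fun k : Fin l => q k ∧ k.val < n)).card := by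
  have h1 : ((List.finRange l).take n).countP q
      = (List.finRange l).countP (fun k => q k && decide (k.val < n)) := by
    conv_rhs => rw [← List.take_append_drop n (List.finRange l)]
    rw [List.countP_append]
    have h2 : ((List.finRange l).take n).countP (fun k => q k && decide (k.val < n))
        = ((List.finRange l).take n).countP q := by
      apply List.countP_congr
      intro x hx
      have : x.val < n := by
        rw [List.mem_take_iff_getElem] at hx
        obtain ⟨i, hi, hxeq⟩ := hx
        rw [List.getElem_finRange] at hxeq
        subst hxeq
        simpa using lt_of_lt_of_le (Nat.lt_min.mp hi).1 le_rfl
      simp [this]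
    have h3 : ((List.finRange l).drop n).countP (fun k => q k && decide (k.val < n)) = 0 := by
      rw [List.countP_eq_zero]
      intro x hx
      have : n ≤ x.val := by
        rw [List.mem_iff_getElem] at hx
        obtain ⟨i, hi, hxeq⟩ := hx
        rw [List.getElem_drop, List.getElem_finRange] at hxeq
        subst hxeq
        simp
      simp [Nat.not_lt.mpr this]
    omega
  rw [h1, aux_countP_finRange]
  congr 1
  apply Finset.filter_congr
  intro x _
  simp

/-- For a skew SYT of shape `μ/ν` (given by the positions `pos k = (row, col)`
of the entries `k = 1,…,l`, rows 0-indexed, columns 1-indexed), the number of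
cells of `ν` in column `a` minus the number in column `a+1` is at least
`d(𝐚)`, where `𝐚` is the subsequence of the column reading word consisting of
the letters `a` and `a+1`. -/
theorem stmt12 (l : ℕ) (nu muP : ℕ → ℕ)
    (hnu : IsPartitionFn nu) (hmuP : IsPartitionFn muP)
    (pos : Fin l → ℕ × ℕ)
    (hcells : ∀ r c : ℕ, (nu r < c ∧ c ≤ muP r) ↔ ∃ k, pos k = (r, c))
    (hinj : Function.Injective pos)
    (hrow : ∀ k k' : Fin l, (pos k).1 = (pos k').1 → (pos k).2 < (pos k').2 → k < k')
    (hcol : ∀ k k' : Fin l, (pos k).2 = (pos k').2 → (pos k).1 < (pos k').1 → k < k')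
    (a : ℕ) (ha : 1 ≤ a)
    (hexa : ∃ k, (pos k).2 = a) (hexa1 : ∃ k, (pos k).2 = a + 1) :
    {r : ℕ | a + 1 ≤ nu r}.ncard
      + sInf {d : ℕ | GoodSeq a
          (((List.finRange l).map (fun k => (pos k).2)).filter
            (fun c => decide (c = a ∨ c = a + 1))) d}
      ≤ {r : ℕ | a ≤ nu r}.ncard := by
  obtain ⟨N, hN⟩ := hnu.2
  set A := sInf {r | nu r < a} with hAdef
  set B := sInf {r | nu r < a + 1} with hBdef
  have hAne : {r | nu r < a}.Nonempty := ⟨N, by simp [hN N le_rfl]; omega⟩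
  have hBne : {r | nu r < a + 1}.Nonempty := ⟨N, by simp [hN N le_rfl]⟩
  have hAmem : nu A < a := Nat.sInf_mem hAne
  have hBmem : nu B < a + 1 := Nat.sInf_mem hBne
  have hAiff : ∀ r, a ≤ nu r ↔ r < A := by
    intro r
    constructor
    · intro h
      by_contra hr
      push_neg at hr
      have := hnu.1 hr
      omega
    · intro h
      by_contra h2
      push_neg at h2
      exact absurd (Nat.sInf_le (show r ∈ {r | nu r < a} from h2)) (by omega)
  have hBiff : ∀ r, a + 1 ≤ nu r ↔ r < B := by
    intro r
    constructor
    · intro h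
      by_contra hr
      push_neg at hr
      have := hnu.1 hr
      omega
    · intro h
      by_contra h2
      push_neg at h2
      exact absurd (Nat.sInf_le (show r ∈ {r | nu r < a + 1} from h2)) (by omega)
  have hBA : B ≤ A := Nat.sInf_le (show nu A < a + 1 by omega)
  have hcard1 : {r : ℕ | a ≤ nu r}.ncard = A := by
    have hset : {r : ℕ | a ≤ nu r} = Set.Iio A := Set.ext fun r => hAiff r
    rw [hset, Set.ncard_eq_toFinset_card', Set.toFinset_Iio, Nat.card_Iio]
  have hcard2 : {r : ℕ | a + 1 ≤ nu r}.ncard = B := by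
    have hset : {r : ℕ | a + 1 ≤ nu r} = Set.Iio B := Set.ext fun r => hBiff r
    rw [hset, Set.ncard_eq_toFinset_card', Set.toFinset_Iio, Nat.card_Iio]
  rw [hcard1, hcard2]
  have hgood : GoodSeq a
      (((List.finRange l).map (fun k => (pos k).2)).filter
        (fun c => decide (c = a ∨ c = a + 1))) (A - B) := by
    set P : ℕ → Bool := fun c => decide (c = a ∨ c = a + 1) with hPdef
    set W : List ℕ := (List.finRange l).map (fun k => (pos k).2) with hWdef
    intro p hp hval
    obtain ⟨n, hn, hget, htake⟩ := aux_filter_take P W p hp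
    have hnl : n < l := by simpa [hWdef] using hn
    set k : Fin l := ⟨n, hnl⟩ with hkdef
    have hk : (pos k).2 = a + 1 := by
      have : W.get ⟨n, hn⟩ = (pos k).2 := by
        simp [hWdef, List.get_eq_getElem, List.getElem_map, List.getElem_finRange, hkdef]
      rw [← this, hget, hval]
    set r : ℕ := (pos k).1 with hrdef
    have hposk : pos k = (r, a + 1) := by
      rw [hrdef, ← hk]
    have hcellk : nu r < a + 1 ∧ a + 1 ≤ muP r := (hcells r (a + 1)).mpr ⟨k, hposk⟩
    have hrB : B ≤ r := by
      by_contra hc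
      push_neg at hc
      have := (hBiff r).mpr hc
      omega
    -- counts as Finset cards
    have hcount : ∀ x : ℕ,
        ((((W.filter P).take p).count x : ℕ))
          = (Finset.univ.filter (fun k' : Fin l => (pos k').2 = x ∧ k' < k)).card
          ∨ ¬ (x = a ∨ x = a + 1) := by
      intro x
      by_cases hxP : x = a ∨ x = a + 1
      · left
        rw [htake]
        have hPx : P x = true := by simp [hPdef, hxP]
        rw [List.count_filter hPx]
        have hWt : W.take n = ((List.finRange l).take n).map (fun k => (pos k).2) := by
          rw [hWdef, List.map_take]
        rw [hWt]
        rw [List.count_eq_countP]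
        rw [List.countP_map]
        rw [show ((fun y => y == x) ∘ fun k : Fin l => (pos k).2)
            = (fun k : Fin l => (pos k).2 == x) from rfl]
        rw [aux_countP_take_finRange]
        congr 1
        apply Finset.filter_congr
        intro y _
        simp [hkdef, Fin.lt_def]
      · right; exact hxP
    have hcountA1 : (((W.filter P).take p).count (a + 1))
        = (Finset.univ.filter (fun k' : Fin l => (pos k').2 = a + 1 ∧ k' < k)).card := by
      rcases hcount (a + 1) with h | h
      · exact h
      · exact absurd (Or.inr rfl) h
    have hcountA : (((W.filter P).take p).count a)
        = (Finset.univ.filter (fun k' : Fin l => (pos k').2 = a ∧ k' < k)).card := by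
      rcases hcount a with h | h
      · exact h
      · exact absurd (Or.inl rfl) h
    -- upper bound for a+1 count
    have hub : (Finset.univ.filter (fun k' : Fin l => (pos k').2 = a + 1 ∧ k' < k)).card
        ≤ r - B := by
      have := Finset.card_le_card_of_injOn (fun k' : Fin l => (pos k').1)
        (s := Finset.univ.filter (fun k' : Fin l => (pos k').2 = a + 1 ∧ k' < k))
        (t := Finset.Ico B r)
        (by
          intro k' hk'
          rw [Finset.mem_coe, Finset.mem_filter] at hk'
          obtain ⟨-, hc', hlt⟩ := hk'
          have hcell' : nu (pos k').1 < a + 1 ∧ a + 1 ≤ muP (pos k').1 :=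
            (hcells (pos k').1 (a + 1)).mpr ⟨k', by rw [← hc']⟩
          have hB' : B ≤ (pos k').1 := by
            by_contra hc2
            push_neg at hc2
            have := (hBiff (pos k').1).mpr hc2
            omega
          have hlt' : (pos k').1 < r := by
            rcases lt_trichotomy (pos k').1 r with h | h | h
            · exact h
            · exfalso
              have : pos k' = pos k := by
                rw [hposk, ← hc', ← h]
              exact absurd (hinj this) (ne_of_lt hlt)
            · exfalso
              have := hcol k k' (by rw [hk, hc']) h
              exact absurd hlt (not_lt_of_gt this)
          exact Finset.mem_Ico.mpr ⟨hB', hlt'⟩)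
        (by
          intro k1 h1 k2 h2 heq
          rw [Finset.mem_coe, Finset.mem_filter] at h1 h2
          have heq' : (pos k1).1 = (pos k2).1 := heq
          apply hinj
          have e1 : pos k1 = ((pos k1).1, (pos k1).2) := rfl
          have e2 : pos k2 = ((pos k2).1, (pos k2).2) := rfl
          rw [e1, e2, heq', h1.2.1, h2.2.1])
      simpa [Nat.card_Ico] using this
    -- lower bound for a count when A ≤ r
    by_cases hrA : A ≤ r
    · have hlb : r + 1 - A
          ≤ (Finset.univ.filter (fun k' : Fin l => (pos k').2 = a ∧ k' < k)).card := by
        classical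
        have hex : ∀ r' ∈ Finset.Ico A (r + 1), ∃ k', pos k' = (r', a) := by
          intro r' hr'
          rw [Finset.mem_Ico] at hr'
          apply (hcells r' a).mp
          constructor
          · have : ¬ a ≤ nu r' := by
              intro hc
              have := (hAiff r').mp hc
              omega
            omega
          · have h1 : muP r ≤ muP r' := hmuP.1 (by omega)
            omega
        -- entry at (r, a)
        obtain ⟨k0, hk0⟩ := hex r (Finset.mem_Ico.mpr ⟨hrA, by omega⟩)
        have hk0k : k0 < k := by
          apply hrow k0 k
          · rw [hk0, hposk]
          · rw [hk0, hposk]; omega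
        set g : ℕ → Fin l := fun r' =>
          if h : ∃ k', pos k' = (r', a) then h.choose else k with hgdef
        have hgspec : ∀ r' ∈ Finset.Ico A (r + 1), pos (g r') = (r', a) := by
          intro r' hr'
          have h := hex r' hr'
          rw [hgdef]
          simp only [dif_pos h]
          exact h.choose_spec
        have := Finset.card_le_card_of_injOn g
          (s := Finset.Ico A (r + 1))
          (t := Finset.univ.filter (fun k' : Fin l => (pos k').2 = a ∧ k' < k))
          (by
            intro r' hr'
            have hg := hgspec r' hr'
            rw [Finset.mem_coe, Finset.mem_filter]
            refine ⟨Finset.mem_univ _, by rw [hg], ?_⟩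
            rw [Finset.mem_coe, Finset.mem_Ico] at hr'
            rcases eq_or_lt_of_le (Nat.lt_succ_iff.mp hr'.2) with h | h
            · -- r' = r
              apply hrow (g r') k
              · rw [hg, hposk, h]
              · rw [hg, hposk]; omega
            · -- r' < r
              have h1 : g r' < k0 := by
                apply hcol (g r') k0
                · rw [hg, hk0]
                · rw [hg, hk0]; exact h
              exact lt_trans h1 hk0k)
          (by
            intro r1 h1 r2 h2 heq
            have hg1 := hgspec r1 (by simpa using h1)
            have hg2 := hgspec r2 (by simpa using h2)
            rw [heq, hg2] at hg1
            exact (Prod.mk.injEq _ _ _ _).mp hg1.symm |>.1)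
        simpa [Nat.card_Ico] using this
      rw [hcountA1, hcountA]
      omega
    · push_neg at hrA
      rw [hcountA1]
      omega
  calc B + sInf {d : ℕ | GoodSeq a _ d} ≤ B + (A - B) := by
        apply Nat.add_le_add_left
        exact Nat.sInf_le hgood
    _ ≤ A := by omega
end

section
/- For w ∈ S̃_n with index i (∑_{j=1}^n (w(j)−j) = n·i), and for any integer m such that w(j) ≤ n(m−1) for all 1 ≤ j ≤ n (i.e., the m-th standard window is 'full'), we have #{j : j > n, w(j) ≤ n(m−1)} = n(m−2) − i. -/
private lemma gauss_icc (n : ℕ) : 2 * ∑ r ∈ Finset.Icc (1:ℤ) (n:ℤ), r = n * (n+1) := by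
  induction n with
  | zero => simp
  | succ k ih =>
    have hins : Finset.Icc (1:ℤ) ((k+1:ℕ):ℤ) = insert ((k:ℤ)+1) (Finset.Icc (1:ℤ) (k:ℤ)) := by
      ext x
      simp only [Finset.mem_Icc, Finset.mem_insert]
      push_cast
      omega
    have hnotmem : ((k:ℤ)+1) ∉ Finset.Icc (1:ℤ) (k:ℤ) := by
      simp
    rw [hins, Finset.sum_insert hnotmem]
    push_cast
    push_cast at ih
    ring_nf
    ring_nf at ih
    linarith

/-- If `w ∈ S̃ₙ` has index `i` and the `m`-th standard window is full
(`w j ≤ n(m-1)` for `1 ≤ j ≤ n`), then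
`#{j > n : w j ≤ n(m-1)} = n(m-2) - i`. -/
theorem stmt15 (n : ℕ) (hn : 1 ≤ n) (w : ℤ → ℤ)
    (hbij : Function.Bijective w)
    (hper : ∀ j : ℤ, w (j + n) = w j + n)
    (i : ℤ) (hidx : ∑ j ∈ Finset.Icc (1 : ℤ) (n : ℤ), (w j - j) = n * i)
    (m : ℤ) (hfull : ∀ j : ℤ, 1 ≤ j → j ≤ n → w j ≤ n * (m - 1)) :
    ({j : ℤ | (n : ℤ) < j ∧ w j ≤ n * (m - 1)}.ncard : ℤ) = n * (m - 2) - i := by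
  have hn0 : (0:ℤ) < (n:ℤ) := by exact_mod_cast hn
  set N : ℤ := (n:ℤ) * (m - 1) with hN
  -- iterated periodicity
  have hper' : ∀ t : ℤ, ∀ j : ℤ, w (j + t * n) = w j + t * n := by
    intro t
    induction t using Int.induction_on with
    | zero => simp
    | succ k ih =>
      intro j
      have h1 : j + ((k:ℤ) + 1) * n = (j + k * n) + n := by ring
      rw [h1, hper, ih]; ring
    | pred k ih =>
      intro j
      have h1 : w ((j + (-(k:ℤ) - 1) * n) + n) = w (j + (-(k:ℤ) - 1) * n) + n := hper _
      have h2 : (j + (-(k:ℤ) - 1) * n) + n = j + (-(k:ℤ)) * n := by ring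
      rw [h2, ih] at h1
      linarith
  -- distinct rows: n ∣ r - r' forces equality on the window
  have hrow : ∀ r r' : ℤ, 1 ≤ r → r ≤ n → 1 ≤ r' → r' ≤ n → (n:ℤ) ∣ r - r' → r = r' := by
    intro r r' h1 h2 h3 h4 hdvd
    have : r - r' = 0 := by
      refine Int.eq_zero_of_abs_lt_dvd hdvd ?_
      rw [abs_lt]; omega
    omega
  set c : ℤ → ℤ := fun r => (N - w r) / n with hc
  have hcnn : ∀ r : ℤ, 1 ≤ r → r ≤ n → 0 ≤ c r := by
    intro r h1 h2
    have := hfull r h1 h2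
    exact Int.ediv_nonneg (by linarith) (le_of_lt hn0)
  set F : Finset ℤ :=
    (Finset.Icc (1:ℤ) (n:ℤ)).biUnion
      (fun r => (Finset.Icc (1:ℤ) (c r)).image (fun k => r + k * n)) with hF
  -- the set equals the finset
  have hset : {j : ℤ | (n : ℤ) < j ∧ w j ≤ N} = ↑F := by
    ext j
    simp only [Set.mem_setOf_eq, hF, Finset.coe_biUnion, Set.mem_iUnion, Finset.mem_coe,
      Finset.mem_image, Finset.mem_Icc]
    constructor
    · rintro ⟨hj1, hj2⟩
      refine ⟨(j - 1) % n + 1, ⟨?_, ?_⟩, (j - 1) / n, ⟨?_, ?_⟩, ?_⟩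
      · have := Int.emod_nonneg (j - 1) (ne_of_gt hn0); omega
      · have := Int.emod_lt_of_pos (j - 1) hn0; omega
      · have := Int.le_ediv_iff_mul_le (b := j - 1) (a := 1) hn0
        omega
      · -- (j-1)/n ≤ c ((j-1)%n + 1)
        rw [hc]
        rw [Int.le_ediv_iff_mul_le hn0]
        have hjr : j = ((j - 1) % n + 1) + ((j - 1) / n) * n := by
          have := Int.mul_ediv_add_emod (j - 1) n
          linarith
        have := hper' ((j - 1) / n) ((j - 1) % n + 1)
        rw [← hjr] at this
        linarith [hj2, this.symm.le]
      · have := Int.mul_ediv_add_emod (j - 1) n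
        linarith
    · rintro ⟨r, ⟨hr1, hr2⟩, k, ⟨hk1, hk2⟩, hj⟩
      constructor
      · nlinarith
      · have h1 : w j = w r + k * n := by rw [← hj] at *; have := hper' k r; linarith [this]
        have h2 : k * n ≤ N - w r := by
          have := (Int.le_ediv_iff_mul_le hn0).mp hk2
          linarith
        linarith
  rw [hset, Set.ncard_coe_finset]
  -- cardinality of the biUnion
  have hcard : F.card = ∑ r ∈ Finset.Icc (1:ℤ) (n:ℤ), (c r).toNat := by
    rw [hF]
    rw [Finset.card_biUnion]
    · apply Finset.sum_congr rfl
      intro r _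
      rw [Finset.card_image_of_injective _ (fun a b hab => by
        have : a * (n:ℤ) = b * n := by linarith
        exact mul_right_cancel₀ (ne_of_gt hn0) this)]
      rw [Int.card_Icc]
      congr 1
      ring
    · intro r hr r' hr' hne
      simp only [Finset.coe_Icc, Set.mem_Icc, Finset.mem_Icc] at hr hr'
      rw [Function.onFun, Finset.disjoint_left]
      intro x hx hx'
      simp only [Finset.mem_image, Finset.mem_Icc] at hx hx'
      obtain ⟨k, _, hk⟩ := hx
      obtain ⟨k', _, hk'⟩ := hx'
      apply hne
      apply hrow r r' hr.1 hr.2 hr'.1 hr'.2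
      exact ⟨k' - k, by linarith [hk, hk']⟩
  have hcardZ : (F.card : ℤ) = ∑ r ∈ Finset.Icc (1:ℤ) (n:ℤ), c r := by
    rw [hcard]
    push_cast
    apply Finset.sum_congr rfl
    intro r hr
    simp only [Finset.mem_Icc] at hr
    exact Int.toNat_of_nonneg (hcnn r hr.1 hr.2)
  rw [hcardZ]
  -- now the sum computation
  have hmods : ∑ r ∈ Finset.Icc (1:ℤ) (n:ℤ), (N - w r) % n
      = (∑ r ∈ Finset.Icc (1:ℤ) (n:ℤ), r) - n := by
    -- the residues are injective and land in Ico 0 n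
    have hinj : Set.InjOn (fun r => (N - w r) % n) ↑(Finset.Icc (1:ℤ) (n:ℤ)) := by
      intro r hr r' hr' heq
      simp only [Finset.coe_Icc, Set.mem_Icc] at hr hr'
      have hdvd : (n:ℤ) ∣ (w r' - w r) := by
        have hmod : (N - w r) ≡ (N - w r') [ZMOD (n:ℤ)] := heq
        have h := Int.ModEq.dvd hmod
        have heq2 : (N - w r') - (N - w r) = w r - w r' := by ring
        rw [heq2] at h
        exact (dvd_sub_comm).mp h
      obtain ⟨t, ht⟩ := hdvd
      have : w r' = w (r + t * n) := by rw [hper' t r]; linarith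
      have hr'' : r' = r + t * n := hbij.injective this
      exact hrow r r' hr.1 hr.2 hr'.1 hr'.2 ⟨-t, by linarith⟩
    have himg : Finset.image (fun r => (N - w r) % n) (Finset.Icc (1:ℤ) (n:ℤ))
        = Finset.Ico (0:ℤ) (n:ℤ) := by
      apply Finset.eq_of_subset_of_card_le
      · intro x hx
        simp only [Finset.mem_image] at hx
        obtain ⟨r, _, hr⟩ := hx
        simp only [Finset.mem_Ico]
        exact hr ▸ ⟨Int.emod_nonneg _ (ne_of_gt hn0), Int.emod_lt_of_pos _ hn0⟩
      · rw [Finset.card_image_of_injOn hinj, Int.card_Ico, Int.card_Icc]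
        simp
    have hsum1 : ∑ r ∈ Finset.Icc (1:ℤ) (n:ℤ), (N - w r) % n
        = ∑ x ∈ Finset.Ico (0:ℤ) (n:ℤ), x := by
      rw [← himg, Finset.sum_image (fun a ha b hb hab => hinj ha hb hab)]
    have hsum2 : ∑ x ∈ Finset.Ico (0:ℤ) (n:ℤ), x
        = (∑ r ∈ Finset.Icc (1:ℤ) (n:ℤ), r) - n := by
      have h0 : Finset.Ico (0:ℤ) (n:ℤ) = insert 0 (Finset.Icc (1:ℤ) ((n:ℤ) - 1)) := by
        ext x
        simp only [Finset.mem_Ico, Finset.mem_insert, Finset.mem_Icc]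
        omega
      have h1 : Finset.Icc (1:ℤ) (n:ℤ) = insert (n:ℤ) (Finset.Icc (1:ℤ) ((n:ℤ) - 1)) := by
        ext x
        simp only [Finset.mem_insert, Finset.mem_Icc]
        omega
      rw [h0, h1, Finset.sum_insert (by simp), Finset.sum_insert (by simp)]
      ring
    rw [hsum1, hsum2]
  -- combine everything
  have hkey : (n:ℤ) * ∑ r ∈ Finset.Icc (1:ℤ) (n:ℤ), c r
      = (n:ℤ) * ((n:ℤ) * (m - 2) - i) := by
    rw [Finset.mul_sum]
    have hterm : ∀ r ∈ Finset.Icc (1:ℤ) (n:ℤ),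
        (n:ℤ) * c r = (N - w r) - (N - w r) % n := by
      intro r _
      have := Int.mul_ediv_add_emod (N - w r) n
      rw [hc]
      linarith
    rw [Finset.sum_congr rfl hterm, Finset.sum_sub_distrib, hmods]
    have hNsum : ∑ r ∈ Finset.Icc (1:ℤ) (n:ℤ), (N - w r)
        = (n:ℤ) * N - ((n:ℤ) * i + ∑ r ∈ Finset.Icc (1:ℤ) (n:ℤ), r) := by
      rw [Finset.sum_sub_distrib, Finset.sum_const, Int.card_Icc]
      have h1 : ((((n:ℤ) + 1 - 1).toNat : ℤ)) = (n:ℤ) := by simp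
      have h2 : ∑ r ∈ Finset.Icc (1:ℤ) (n:ℤ), w r
          = (n:ℤ) * i + ∑ r ∈ Finset.Icc (1:ℤ) (n:ℤ), r := by
        have := hidx
        have h3 : ∑ j ∈ Finset.Icc (1:ℤ) (n:ℤ), (w j - j)
            = (∑ j ∈ Finset.Icc (1:ℤ) (n:ℤ), w j) - ∑ j ∈ Finset.Icc (1:ℤ) (n:ℤ), j :=
          Finset.sum_sub_distrib w (fun j => j)
        linarith
      rw [h2]
      simp only [nsmul_eq_mul]
      rw [h1]
    rw [hNsum]
    have hgauss := gauss_icc n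
    rw [hN]
    ring_nf
    ring_nf at hgauss
    linarith
  have := mul_left_cancel₀ (ne_of_gt hn0) hkey
  linarith
end
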